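/- For 1 ≤ i ≤ 2n set τi = 2n+1-i, and for a palindromic tuple v ∈ Λ_{c,d} define H_{i,v}(u) = (1 - (δ_{i,n} - δ_{i,n+1})ħ/(4u)) · Φ_{[v]_i}(-u - (n-i)ħ/2 - ħ/4) · Φ_{[v]_{τi}}(u + (n-i)ħ/2 + ħ/4), where Φ_I(z) = ∏_{s∈I} (1 + ħ/(x_s - z)). Then H_{τi,v}(-u) = H_{i,v}(u). -/
import Mathlib


/-- For `1 ≤ i ≤ 2n`, `τi = 2n+1-i`, and a palindromic `v ∈ Λ_{c,d}`, the generating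
function `H_{i,v}(u) = (1 - (δ_{i,n} - δ_{i,n+1})ħ/(4u)) Φ_{[v]_i}(-u - cᵢ) Φ_{[v]_{τi}}(u + cᵢ)`
(with `cᵢ = (n-i)ħ/2 + ħ/4` and `Φ_I(z) = ∏_{s∈I}(1 + ħ/(xₛ - z))`) satisfies
`H_{τi,v}(-u) = H_{i,v}(u)`, where `x_r = -x_{2d+1-r}`. -/
theorem stmt12 (n d i : ℕ) (hi1 : 1 ≤ i) (hi2 : i ≤ 2 * n)
    (v : ℕ → ℕ) (hpal : ∀ k, 1 ≤ k → k ≤ 2 * n + 1 → v k = v (2 * n + 2 - k))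
    (hsum : ∑ k ∈ Finset.Icc 1 (2 * n + 1), v k = 2 * d)
    (x : ℕ → ℂ) (hx : ∀ r, 1 ≤ r → r ≤ 2 * d → x r = - x (2 * d + 1 - r))
    (hbar u : ℂ) :
    (let vbar : ℕ → ℕ := (fun k => ∑ l ∈ Finset.Icc 1 k, v l);
     let I : ℕ → Finset ℕ := (fun k => Finset.Icc (vbar (k - 1) + 1) (vbar k));
     let Φ : Finset ℕ → ℂ → ℂ := (fun S z => ∏ s ∈ S, (1 + hbar / (x s - z)));
     let c : ℕ → ℂ := (fun k => ((n : ℂ) - (k : ℂ)) * hbar / 2 + hbar / 4);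
     let H : ℕ → ℂ → ℂ := (fun k w =>
       (1 - (((if k = n then 1 else 0) - (if k = n + 1 then 1 else 0) : ℂ)) * hbar / (4 * w)) *
         Φ (I k) (-w - c k) * Φ (I (2 * n + 1 - k)) (w + c k));
     H (2 * n + 1 - i) (-u) = H i u) := by
  intro vbar I Φ c H
  have hi3 : i ≤ 2 * n + 1 := by omega
  have h1 : 2 * n + 1 - (2 * n + 1 - i) = i := by omega
  have hc : c (2 * n + 1 - i) = - c i := by
    simp only [c]
    rw [Nat.cast_sub hi3]
    push_cast
    ring
  have hn1 : ((2 * n + 1 - i = n) : Prop) = (i = n + 1) := by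
    apply propext; omega
  have hn2 : ((2 * n + 1 - i = n + 1) : Prop) = (i = n) := by
    apply propext; omega
  simp only [H, h1, hc, hn1, hn2]
  have harg1 : -(-u) - -(c i) = u + c i := by ring
  have harg2 : -u + -(c i) = -u - c i := by ring
  rw [harg1, harg2]
  have hpre : (1 - ((if i = n + 1 then (1:ℂ) else 0) - (if i = n then 1 else 0)) * hbar /
      (4 * -u)) = 1 - ((if i = n then (1:ℂ) else 0) - (if i = n + 1 then 1 else 0)) * hbar /
      (4 * u) := by
    rw [show (4:ℂ) * -u = -(4 * u) by ring, div_neg]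
    ring
  rw [hpre]
  ring
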